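/- Let B_1, …, B_k be nonempty compact convex subsets of ℝⁿ, and for each subset s ⊆ [k] define v(s) = Vol_n(∑_{i ∈ s} B_i) (with v(∅) = 0). Then v is a supermodular set function: for all subsets s, t of [k], v(s ∪ t) + v(s ∩ t) ≥ v(s) + v(t). -/

import Mathlib

open MeasureTheory Finset
open scoped Pointwise RealInnerProductSpace

namespace VolumeSupermodularAux

variable {n : ℕ}

theorem exists_proj {K : Set (EuclideanSpace ℝ (Fin n))} (hc : Convex ℝ K) (hcl : IsClosed K)
    (hne : K.Nonempty) (x : EuclideanSpace ℝ (Fin n)) :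
    ∃ p ∈ K, ∀ w ∈ K, ⟪x - p, w - p⟫ ≤ 0 := by
  obtain ⟨p, hpK, hmin⟩ := exists_norm_eq_iInf_of_complete_convex hne hcl.isComplete hc x
  exact ⟨p, hpK, (norm_eq_iInf_iff_real_inner_le_zero hc hpK).mp hmin⟩

set_option maxHeartbeats 1000000 in
theorem lemP {K K' : Set (EuclideanSpace ℝ (Fin n))} (hKc : IsCompact K) (hKconv : Convex ℝ K)
    (hKne : K.Nonempty) (hK'c : IsCompact K') (hsub : K ⊆ K') {m : ℕ} (hm : 0 < m)
    (w : Fin m → EuclideanSpace ℝ (Fin n)) :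
    volume K' + volume (K + convexHull ℝ (Set.range w)) ≤
      volume (K' + convexHull ℝ (Set.range w)) + volume K := by
  classical
  set cf : Set (EuclideanSpace ℝ (Fin n)) := convexHull ℝ (Set.range w) with hcfdef
  choose p hpK hpmin using exists_proj hKconv hKc.isClosed hKne
  set v : EuclideanSpace ℝ (Fin n) → EuclideanSpace ℝ (Fin n) := fun x => x - p x with hvdef
  -- p is 1-Lipschitz
  have hlip : LipschitzWith 1 p := by
    apply LipschitzWith.of_dist_le_mul
    intro x y
    rw [dist_eq_norm, dist_eq_norm, NNReal.coe_one, one_mul]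
    rcases eq_or_ne (p x) (p y) with h | h
    · simp [h, norm_nonneg]
    · have h1 : ⟪x - p x, p y - p x⟫ ≤ 0 := hpmin x (p y) (hpK y)
      have h2 : ⟪y - p y, p x - p y⟫ ≤ 0 := hpmin y (p x) (hpK x)
      have key : ‖p x - p y‖ ^ 2 ≤ ⟪x - y, p x - p y⟫ := by
        have e1 : ⟪x - p x, p x - p y⟫ ≥ 0 := by
          have : p x - p y = -(p y - p x) := by abel
          rw [this, inner_neg_right]; linarith
        have e2 : ⟪y - p y, p x - p y⟫ ≤ 0 := h2
        have e3 : ⟪x - y, p x - p y⟫ =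
            ⟪x - p x, p x - p y⟫ - ⟪y - p y, p x - p y⟫ + ⟪p x - p y, p x - p y⟫ := by
          rw [← inner_sub_left, ← inner_add_left]
          congr 1
          abel
        rw [e3, real_inner_self_eq_norm_sq]
        linarith
      have hcs : ⟪x - y, p x - p y⟫ ≤ ‖x - y‖ * ‖p x - p y‖ := real_inner_le_norm _ _
      have hpos : 0 < ‖p x - p y‖ := by
        rw [norm_pos_iff, sub_ne_zero]; exact h
      nlinarith
  have hvcont : Continuous v := continuous_id.sub hlip.continuous
  set ip : EuclideanSpace ℝ (Fin n) → Fin m → ℝ := fun x i => ⟪v x, w i⟫ with hipdef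
  have hipc : ∀ i, Continuous (fun x => ip x i) := fun i => hvcont.inner continuous_const
  set S : Fin m → Set (EuclideanSpace ℝ (Fin n)) := fun j =>
    {x | ∀ i, ip x i ≤ ip x j} ∩ {x | ∀ i, i < j → ip x i < ip x j} with hSdef
  have hSm : ∀ j, MeasurableSet (S j) := by
    intro j
    apply MeasurableSet.inter
    · have : {x | ∀ i, ip x i ≤ ip x j} = ⋂ i, {x | ip x i ≤ ip x j} := by ext; simp
      rw [this]
      exact MeasurableSet.iInter fun i =>
        measurableSet_le (hipc i).measurable (hipc j).measurable
    · have : {x | ∀ i, i < j → ip x i < ip x j} = ⋂ i, ⋂ _h : i < j, {x | ip x i < ip x j} := by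
        ext; simp
      rw [this]
      exact MeasurableSet.iInter fun i => MeasurableSet.iInter fun _ =>
        measurableSet_lt (hipc i).measurable (hipc j).measurable
  have hcover : ∀ x : EuclideanSpace ℝ (Fin n), ∃ j, x ∈ S j := by
    intro x
    have : Nonempty (Fin m) := ⟨⟨0, hm⟩⟩
    have hJne : (Finset.univ.filter (fun j => ∀ i, ip x i ≤ ip x j)).Nonempty := by
      obtain ⟨j0, hj0⟩ := Finite.exists_max (ip x)
      exact ⟨j0, by simp [hj0]⟩
    set j := (Finset.univ.filter (fun j => ∀ i, ip x i ≤ ip x j)).min' hJne with hjdef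
    have hjmem := (Finset.univ.filter (fun j => ∀ i, ip x i ≤ ip x j)).min'_mem hJne
    rw [Finset.mem_filter] at hjmem
    refine ⟨j, hjmem.2, ?_⟩
    intro i hij
    by_contra hcon
    push_neg at hcon
    have hieq : ∀ i', ip x i' ≤ ip x i := fun i' => le_trans (hjmem.2 i') hcon
    have : j ≤ i := Finset.min'_le _ _ (by simp [hieq])
    exact absurd hij (not_lt.mpr this)

  -- auxiliary inner product inequality
  have haux : ∀ x y : EuclideanSpace ℝ (Fin n), ∀ i j, x ∈ S i → y ∈ S j →
      w i + x = w j + y → ‖v x‖ ^ 2 ≤ ⟪v x, v y⟫ := by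
    intro x y i j hxi hyj heq
    have hsub1 : ⟪v x, p y - p x⟫ ≤ 0 := hpmin x (p y) (hpK y)
    have hup : ⟪v x, y - p x⟫ ≤ ⟪v x, v y⟫ := by
      have hd : y - p x = v y + (p y - p x) := by simp only [hvdef]; abel
      rw [hd, inner_add_right]; linarith
    have hyx : y - x = w i - w j := by
      calc y - x = (w j + y) - (w j + x) := by abel
        _ = (w i + x) - (w j + x) := by rw [heq]
        _ = w i - w j := by abel
    have h1 : ⟪v x, y - p x⟫ = ⟪v x, v x⟫ + ⟪v x, y - x⟫ := by
      rw [← inner_add_right]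
      congr 1
      simp only [hvdef]
      abel
    have h2 : ⟪v x, y - x⟫ = ip x i - ip x j := by
      rw [hyx, inner_sub_right]
    have h3 : (0:ℝ) ≤ ip x i - ip x j := sub_nonneg.mpr (hxi.1 j)
    have h4 : ⟪v x, v x⟫ = ‖v x‖ ^ 2 := real_inner_self_eq_norm_sq _
    linarith
  -- the key injectivity statement
  have hkey : ∀ x y : EuclideanSpace ℝ (Fin n), x ∈ K' \ K → y ∈ K' \ K → ∀ i j,
      x ∈ S i → y ∈ S j → w i + x = w j + y → i = j ∧ x = y := by
    intro x y hx hy i j hxi hyj heq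
    have hvx : v x ≠ 0 := by
      intro h0
      apply hx.2
      have hx' : x = p x := by
        have : x - p x = 0 := h0
        rwa [sub_eq_zero] at this
      rw [hx']; exact hpK x
    have hvy : v y ≠ 0 := by
      intro h0
      apply hy.2
      have hy' : y = p y := by
        have : y - p y = 0 := h0
        rwa [sub_eq_zero] at this
      rw [hy']; exact hpK y
    have ha := haux x y i j hxi hyj heq
    have hb := haux y x j i hyj hxi heq.symm
    have hcs1 : ⟪v x, v y⟫ ≤ ‖v x‖ * ‖v y‖ := real_inner_le_norm _ _
    have hcs2 : ⟪v y, v x⟫ ≤ ‖v y‖ * ‖v x‖ := real_inner_le_norm _ _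
    have hxpos : 0 < ‖v x‖ := norm_pos_iff.mpr hvx
    have hypos : 0 < ‖v y‖ := norm_pos_iff.mpr hvy
    have hxle : ‖v x‖ ≤ ‖v y‖ := by nlinarith
    have hyle : ‖v y‖ ≤ ‖v x‖ := by nlinarith
    have hxy : ‖v x‖ = ‖v y‖ := le_antisymm hxle hyle
    have hinner : ⟪v x, v y⟫ = ‖v x‖ * ‖v y‖ := by nlinarith
    have hveq : v x = v y := by
      have hz : ‖v x - v y‖ ^ 2 = 0 := by
        rw [norm_sub_sq_real]
        nlinarith
      have : ‖v x - v y‖ = 0 := by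
        have := sq_eq_zero_iff.mp hz
        exact this
      rwa [norm_eq_zero, sub_eq_zero] at this
    have hip : ∀ i', ip x i' = ip y i' := by
      intro i'
      simp only [hipdef]
      rw [hveq]
    have hij : i = j := by
      by_contra hne'
      rcases lt_or_gt_of_ne hne' with h | h
      · have h5 := hyj.2 i h
        have h6 := hxi.1 j
        rw [← hip i, ← hip j] at h5
        linarith
      · have h5 := hxi.2 j h
        have h6 := hyj.1 i
        rw [← hip i, ← hip j] at h6
        linarith
    refine ⟨hij, ?_⟩
    rw [hij] at heq
    exact add_left_cancel heq

  -- pieces and their translates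
  set R : Fin m → Set (EuclideanSpace ℝ (Fin n)) := fun j => (K' \ K) ∩ S j with hRdef
  set T : Fin m → Set (EuclideanSpace ℝ (Fin n)) := fun j => (fun z => -w j + z) ⁻¹' (R j)
    with hTdef
  have hRm : ∀ j, MeasurableSet (R j) := fun j =>
    (hK'c.measurableSet.diff hKc.measurableSet).inter (hSm j)
  have hTm : ∀ j, MeasurableSet (T j) := fun j =>
    (hRm j).preimage (measurable_const_add _)
  have hdisj : Pairwise (Function.onFun Disjoint T) := by
    intro i j hij
    rw [Function.onFun, Set.disjoint_left]
    intro z hzi hzj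
    have hxi : -w i + z ∈ R i := hzi
    have hyj : -w j + z ∈ R j := hzj
    have heq : w i + (-w i + z) = w j + (-w j + z) := by
      rw [add_neg_cancel_left, add_neg_cancel_left]
    exact hij (hkey _ _ hxi.1 hyj.1 i j hxi.2 hyj.2 heq).1
  have hTsub : ∀ j, T j ⊆ (K' + cf) \ (K + cf) := by
    intro j z hz
    have hR : -w j + z ∈ R j := hz
    set x := -w j + z with hxd
    have hzx : z = w j + x := by rw [hxd, add_neg_cancel_left]
    have hwj : w j ∈ cf := subset_convexHull ℝ _ ⟨j, rfl⟩
    constructor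
    · rw [hzx, add_comm (w j) x]
      exact Set.add_mem_add hR.1.1 hwj
    · intro hmem
      rw [Set.mem_add] at hmem
      obtain ⟨k, hk, c, hc, hkc⟩ := hmem
      have hhs : ⟪v x, c⟫ ≤ ip x j := by
        have hconvH : Convex ℝ {y : EuclideanSpace ℝ (Fin n) | ⟪v x, y⟫ ≤ ip x j} :=
          convex_halfSpace_le
            ⟨fun a b => inner_add_right _ _ _, fun r a => by rw [real_inner_smul_right, smul_eq_mul]⟩ _
        have hsubH : Set.range w ⊆ {y : EuclideanSpace ℝ (Fin n) | ⟪v x, y⟫ ≤ ip x j} := by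
          rintro _ ⟨i, rfl⟩
          exact hR.2.1 i
        exact convexHull_min hsubH hconvH hc
      have h2 : x + w j = k + c := by
        rw [add_comm x (w j), ← hzx]
        exact hkc.symm
      have hxk : x - k = c - w j := by
        calc x - k = (x + w j) - (k + w j) := by abel
          _ = (k + c) - (k + w j) := by rw [h2]
          _ = c - w j := by abel
      have hq1 : ⟪v x, x - k⟫ ≤ 0 := by
        rw [hxk, inner_sub_right]
        have hj' : ip x j = ⟪v x, w j⟫ := rfl
        linarith
      have hpx : ⟪v x, k - p x⟫ ≤ 0 := hpmin x k hk
      have hvx0 : v x ≠ 0 := by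
        intro h0
        apply hR.1.2
        have hx' : x = p x := by
          have : x - p x = 0 := h0
          rwa [sub_eq_zero] at this
        rw [hx']; exact hpK x
      have hq2 : ⟪v x, x - k⟫ = ⟪v x, v x⟫ + ⟪v x, p x - k⟫ := by
        rw [← inner_add_right]
        congr 1
        simp only [hvdef]
        abel
      have hq4 : (0:ℝ) ≤ ⟪v x, p x - k⟫ := by
        have hrw : p x - k = -(k - p x) := by abel
        rw [hrw, inner_neg_right]
        linarith
      have hq3 : (0:ℝ) < ⟪v x, v x⟫ := by
        rw [real_inner_self_eq_norm_sq]
        have : 0 < ‖v x‖ := norm_pos_iff.mpr hvx0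
        positivity
      linarith
  have hcfc : IsCompact cf := (Set.finite_range w).isCompact_convexHull ℝ
  have hKcfc : IsCompact (K + cf) := hKc.add hcfc
  have hsub2 : K + cf ⊆ K' + cf := Set.add_subset_add_right hsub
  have e1 : volume K' = volume (K' \ K) + volume K := by
    conv_lhs => rw [← Set.diff_union_of_subset hsub]
    exact measure_union Set.disjoint_sdiff_left hKc.measurableSet
  have e2 : volume (K' + cf) = volume ((K' + cf) \ (K + cf)) + volume (K + cf) := by
    conv_lhs => rw [← Set.diff_union_of_subset hsub2]
    exact measure_union Set.disjoint_sdiff_left hKcfc.measurableSet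
  have hmain : volume (K' \ K) ≤ volume ((K' + cf) \ (K + cf)) := by
    have hsub1 : K' \ K ⊆ ⋃ j, R j := by
      intro x hx
      obtain ⟨j, hj⟩ := hcover x
      exact Set.mem_iUnion.mpr ⟨j, hx, hj⟩
    calc volume (K' \ K) ≤ volume (⋃ j, R j) := measure_mono hsub1
      _ ≤ ∑' j, volume (R j) := measure_iUnion_le R
      _ = ∑' j, volume (T j) := tsum_congr fun j =>
          (measure_preimage_add volume (-w j) (R j)).symm
      _ = volume (⋃ j, T j) := (measure_iUnion hdisj hTm).symm
      _ ≤ volume ((K' + cf) \ (K + cf)) := measure_mono (Set.iUnion_subset hTsub)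
  rw [e1, e2]
  calc volume (K' \ K) + volume K + volume (K + cf)
      = volume (K' \ K) + (volume (K + cf) + volume K) := by ring
    _ ≤ volume ((K' + cf) \ (K + cf)) + (volume (K + cf) + volume K) :=
        add_le_add_left hmain _
    _ = volume ((K' + cf) \ (K + cf)) + volume (K + cf) + volume K := by ring

theorem tendsto_thick {S : Set (EuclideanSpace ℝ (Fin n))} (hSc : IsCompact S)
    (hSne : S.Nonempty) :
    Filter.Tendsto (fun m : ℕ => volume (S + Metric.closedBall 0 (1 / (m + 1))))
      Filter.atTop (nhds (volume S)) := by
  have hball : ∀ m : ℕ, IsCompact (S + Metric.closedBall (0 : EuclideanSpace ℝ (Fin n))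
      (1 / (m + 1))) := fun m => hSc.add (isCompact_closedBall _ _)
  have hmeas : ∀ m : ℕ, NullMeasurableSet
      (S + Metric.closedBall (0 : EuclideanSpace ℝ (Fin n)) (1 / (m + 1))) volume :=
    fun m => ((hball m).isClosed.measurableSet).nullMeasurableSet
  have hanti : Antitone (fun m : ℕ =>
      S + Metric.closedBall (0 : EuclideanSpace ℝ (Fin n)) (1 / (m + 1))) := by
    intro a b hab
    apply Set.add_subset_add_left
    apply Metric.closedBall_subset_closedBall
    have ha : (0:ℝ) < a + 1 := by positivity
    have hb' : (a:ℝ) + 1 ≤ b + 1 := by exact_mod_cast by omega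
    exact one_div_le_one_div_of_le ha hb'
  have hfin : ∃ m : ℕ, volume (S + Metric.closedBall (0 : EuclideanSpace ℝ (Fin n))
      (1 / (m + 1))) ≠ ⊤ := ⟨0, (hball 0).measure_lt_top.ne⟩
  have hint : (⋂ m : ℕ, (S + Metric.closedBall (0 : EuclideanSpace ℝ (Fin n))
      (1 / (m + 1)))) = S := by
    apply Set.Subset.antisymm
    · intro x hx
      by_contra hxS
      have hpos : 0 < Metric.infDist x S :=
        (hSc.isClosed.notMem_iff_infDist_pos hSne).mp hxS
      obtain ⟨m, hm⟩ := exists_nat_one_div_lt hpos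
      have hxm := Set.mem_iInter.mp hx m
      rw [Set.mem_add] at hxm
      obtain ⟨s, hs, b, hb, hsb⟩ := hxm
      rw [Metric.mem_closedBall, dist_zero_right] at hb
      have hdist : dist x s ≤ 1 / (m + 1) := by
        rw [← hsb, dist_eq_norm]
        simpa using hb
      have := Metric.infDist_le_dist_of_mem (x := x) hs
      linarith
    · intro x hx
      apply Set.mem_iInter.mpr
      intro m
      rw [Set.mem_add]
      refine ⟨x, hx, 0, ?_, by simp⟩
      rw [Metric.mem_closedBall, dist_zero_right]
      simp
      positivity
  have h := tendsto_measure_iInter_atTop hmeas hanti hfin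
  rwa [hint] at h

theorem lemM {K K' C : Set (EuclideanSpace ℝ (Fin n))} (hKc : IsCompact K)
    (hKconv : Convex ℝ K) (hKne : K.Nonempty) (hK'c : IsCompact K') (hsub : K ⊆ K')
    (hCc : IsCompact C) (hCconv : Convex ℝ C) (hCne : C.Nonempty) :
    volume K' + volume (K + C) ≤ volume (K' + C) + volume K := by
  have key : ∀ m : ℕ, volume K' + volume (K + C) ≤
      volume ((K' + C) + Metric.closedBall 0 (1 / (m + 1))) +
        volume (K + Metric.closedBall 0 (1 / (m + 1))) := by
    intro m
    set ε : ℝ := 1 / (m + 1) with hεdef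
    have hε : 0 < ε := by positivity
    set Bε : Set (EuclideanSpace ℝ (Fin n)) := Metric.closedBall 0 ε with hBdef
    have hBc : IsCompact Bε := isCompact_closedBall _ _
    have hBconv : Convex ℝ Bε := convex_closedBall _ _
    have hBne : Bε.Nonempty := ⟨0, by simp [hBdef, Metric.mem_closedBall, hε.le]⟩
    have h0B : (0 : EuclideanSpace ℝ (Fin n)) ∈ Bε := by
      simp [hBdef, Metric.mem_closedBall, hε.le]
    -- finite ε-net of C
    obtain ⟨F, hFsub, hFfin, hFcov⟩ :=
      totallyBounded_iff_subset.mp hCc.totallyBounded _ (Metric.dist_mem_uniformity hε)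
    have hFne : F.Nonempty := by
      obtain ⟨c, hc⟩ := hCne
      obtain ⟨y, hy, _⟩ := Set.mem_iUnion₂.mp (hFcov hc)
      exact ⟨y, hy⟩
    set N : ℕ := hFfin.toFinset.card with hNdef
    have hN : 0 < N := by
      rw [hNdef, Finset.card_pos]
      obtain ⟨y, hy⟩ := hFne
      exact ⟨y, hFfin.mem_toFinset.mpr hy⟩
    set w : Fin N → EuclideanSpace ℝ (Fin n) := fun i => (hFfin.toFinset.equivFin.symm i : _)
      with hwdef
    have hrange : Set.range w = F := by
      ext z
      constructor
      · rintro ⟨i, rfl⟩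
        exact hFfin.mem_toFinset.mp (hFfin.toFinset.equivFin.symm i).2
      · intro hz
        refine ⟨hFfin.toFinset.equivFin ⟨z, hFfin.mem_toFinset.mpr hz⟩, ?_⟩
        rw [hwdef]
        simp
    set cf : Set (EuclideanSpace ℝ (Fin n)) := convexHull ℝ (Set.range w) with hcfdef
    have hcfC : cf ⊆ C := by
      rw [hcfdef, hrange]
      exact convexHull_min hFsub hCconv
    have hP := lemP (hKc.add hBc) (hKconv.add hBconv) (hKne.add hBne) (hK'c.add hBc)
      (Set.add_subset_add_right hsub) hN w
    rw [← hcfdef] at hP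
    -- inclusions
    have incl1 : K + C ⊆ (K + Bε) + cf := by
      rintro z hz
      rw [Set.mem_add] at hz
      obtain ⟨k, hk, c, hc, rfl⟩ := hz
      obtain ⟨y, hy, hdy⟩ := Set.mem_iUnion₂.mp (hFcov hc)
      have hcy : c - y ∈ Bε := by
        rw [hBdef, Metric.mem_closedBall, dist_zero_right]
        have : dist c y < ε := hdy
        rw [dist_eq_norm] at this
        exact this.le
      have hyc : y ∈ cf := by
        rw [hcfdef, hrange]
        exact subset_convexHull ℝ _ hy
      have : k + c = (k + (c - y)) + y := by abel
      rw [this]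
      exact Set.add_mem_add (Set.add_mem_add hk hcy) hyc
    have incl2 : K' ⊆ K' + Bε := by
      intro x hx
      have : x = x + 0 := by abel
      rw [this]
      exact Set.add_mem_add hx h0B
    have incl3 : (K' + Bε) + cf ⊆ (K' + C) + Bε := by
      rintro z hz
      rw [Set.mem_add] at hz
      obtain ⟨u, hu, y, hy, rfl⟩ := hz
      rw [Set.mem_add] at hu
      obtain ⟨k, hk, b, hb, rfl⟩ := hu
      have : k + b + y = (k + y) + b := by abel
      rw [this]
      exact Set.add_mem_add (Set.add_mem_add hk (hcfC hy)) hb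
    calc volume K' + volume (K + C)
        ≤ volume (K' + Bε) + volume ((K + Bε) + cf) :=
          add_le_add (measure_mono incl2) (measure_mono incl1)
      _ ≤ volume ((K' + Bε) + cf) + volume (K + Bε) := hP
      _ ≤ volume ((K' + C) + Bε) + volume (K + Bε) :=
          add_le_add_left (measure_mono incl3) _
  have hK'ne : K'.Nonempty := hKne.mono hsub
  have h1 := tendsto_thick (hK'c.add hCc) (hK'ne.add hCne)
  have h2 := tendsto_thick hKc hKne
  exact ge_of_tendsto' (h1.add h2) key

end VolumeSupermodularAux

open VolumeSupermodularAux in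
/-- **Supermodularity of the volume of Minkowski sums of convex bodies** (Theorem 4.6
of Fradelizi–Madiman–Marsiglietti–Zvavitch): for nonempty compact convex sets
`B 1, …, B k ⊆ ℝⁿ`, the set function `v(s) = Vol_n(∑_{i ∈ s} B i)` (with the empty
Minkowski sum equal to `{0}`, so `v(∅) = 0`) is supermodular:
`v(s ∪ t) + v(s ∩ t) ≥ v(s) + v(t)` for all `s, t ⊆ [k]`. -/
theorem volume_minkowski_sum_supermodular {n k : ℕ}
    (B : Fin k → Set (EuclideanSpace ℝ (Fin n)))
    (hne : ∀ i, (B i).Nonempty) (hcpt : ∀ i, IsCompact (B i))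
    (hconv : ∀ i, Convex ℝ (B i)) (s t : Finset (Fin k)) :
    volume (∑ i ∈ s, B i) + volume (∑ i ∈ t, B i) ≤
      volume (∑ i ∈ s ∪ t, B i) + volume (∑ i ∈ s ∩ t, B i) := by
  classical
  have hgood : ∀ u : Finset (Fin k), IsCompact (∑ i ∈ u, B i) ∧ Convex ℝ (∑ i ∈ u, B i) ∧
      (∑ i ∈ u, B i).Nonempty := by
    intro u
    refine Finset.sum_induction B
      (fun A => IsCompact A ∧ Convex ℝ A ∧ A.Nonempty)
      (fun a b ha hb => ⟨ha.1.add hb.1, ha.2.1.add hb.2.1, ha.2.2.add hb.2.2⟩) ?_ 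
      (fun i _ => ⟨hcpt i, hconv i, hne i⟩)
    rw [← Set.singleton_zero]
    exact ⟨isCompact_singleton, convex_singleton 0, Set.singleton_nonempty 0⟩
  set I := ∑ i ∈ s ∩ t, B i with hI
  set Cs := ∑ i ∈ s \ t, B i with hCs
  set Ct := ∑ i ∈ t \ s, B i with hCt
  have hdecS : ∑ i ∈ s, B i = I + Cs := (Finset.sum_inter_add_sum_sdiff s t B).symm
  have hdecT : ∑ i ∈ t, B i = I + Ct := by
    rw [hI, Finset.inter_comm]
    exact (Finset.sum_inter_add_sum_sdiff t s B).symm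
  have hdecU : ∑ i ∈ s ∪ t, B i = (∑ i ∈ s, B i) + Ct := by
    rw [← Finset.union_sdiff_self_eq_union, Finset.sum_union Finset.sdiff_disjoint.symm]
  obtain ⟨c₀, hc₀⟩ := (hgood (s \ t)).2.2
  set Kt : Set (EuclideanSpace ℝ (Fin n)) := {c₀} + I with hKt
  have htransl : ∀ X : Set (EuclideanSpace ℝ (Fin n)), volume ({c₀} + X) = volume X := by
    intro X
    have he : {c₀} + X = (fun z => -c₀ + z) ⁻¹' X := by
      ext z
      simp only [Set.mem_add, Set.mem_singleton_iff, Set.mem_preimage]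
      constructor
      · rintro ⟨a, rfl, b, hb, rfl⟩
        simpa using hb
      · intro hz
        exact ⟨c₀, rfl, -c₀ + z, hz, by abel⟩
    rw [he, measure_preimage_add]
  have hKtc : IsCompact Kt := isCompact_singleton.add (hgood _).1
  have hKtconv : Convex ℝ Kt := (convex_singleton c₀).add (hgood _).2.1
  have hKtne : Kt.Nonempty := (Set.singleton_nonempty c₀).add (hgood _).2.2
  have hKtsub : Kt ⊆ ∑ i ∈ s, B i := by
    rw [hdecS]
    rintro z hz
    rw [Set.mem_add] at hz
    obtain ⟨a, ha, b, hb, rfl⟩ := hz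
    rw [Set.mem_singleton_iff] at ha
    rw [ha, add_comm c₀ b]
    exact Set.add_mem_add hb hc₀
  have hM := lemM hKtc hKtconv hKtne (hgood s).1 hKtsub (hgood (t \ s)).1 (hgood (t \ s)).2.1
    (hgood (t \ s)).2.2
  rw [hdecU]
  have e1 : Kt + Ct = {c₀} + (∑ i ∈ t, B i) := by
    rw [hKt, hdecT, add_assoc]
  rw [e1, htransl] at hM
  rw [hKt, htransl] at hM
  calc volume (∑ i ∈ s, B i) + volume (∑ i ∈ t, B i)
      ≤ volume ((∑ i ∈ s, B i) + Ct) + volume I := hM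
    _ = volume ((∑ i ∈ s, B i) + Ct) + volume (∑ i ∈ s ∩ t, B i) := by rw [hI]
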